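/- Let (G,P) be a quasi-lattice ordered group and let μ be a finitely additive probability measure on (P,B_P) such that the family (μ(pP))_{p∈P} is summable. For p ∈ P set w_p = inf{μ(Ω) : Ω ∈ B_P, p ∈ Ω}. Then for every Ω ∈ B_P, the family (w_p)_{p∈Ω} is summable with μ(Ω) = ∑_{p∈Ω} w_p. -/

import Mathlib

/-- The order on `G` induced by the submonoid `P`: `g ≤ h` iff `g⁻¹ * h ∈ P`. -/
def QLe {G : Type*} [Group G] (P : Submonoid G) (g h : G) : Prop := g⁻¹ * h ∈ P

/-- `u` is the least upper bound of `g` and `h` with respect to `QLe P`. -/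
def QLub {G : Type*} [Group G] (P : Submonoid G) (g h u : G) : Prop :=
  QLe P g u ∧ QLe P h u ∧ ∀ v, QLe P g v → QLe P h v → QLe P u v

/-- `(G, P)` is a quasi-lattice ordered group. -/
structure QuasiLatticeOrdered {G : Type*} [Group G] (P : Submonoid G) : Prop where
  gen : Subgroup.closure (P : Set G) = ⊤
  cap : ∀ g ∈ P, g⁻¹ ∈ P → g = 1
  lub : ∀ g h : G, (∃ u, QLe P g u ∧ QLe P h u) → ∃ u, QLub P g h u

/-- Membership in the algebra `B_P` of subsets of `P` generated by the sets
`pP = {x | p⁻¹ x ∈ P}`, `p ∈ P`: the smallest collection of subsets containing the sets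
`pP` and closed under complements in `P`, finite unions and finite intersections. -/
inductive MemBP {G : Type*} [Group G] (P : Submonoid G) : Set G → Prop
  | basic (p : G) (hp : p ∈ P) : MemBP P {x | QLe P p x}
  | compl (Ω : Set G) : MemBP P Ω → MemBP P ((P : Set G) \ Ω)
  | union (Ω₁ Ω₂ : Set G) : MemBP P Ω₁ → MemBP P Ω₂ → MemBP P (Ω₁ ∪ Ω₂)
  | inter (Ω₁ Ω₂ : Set G) : MemBP P Ω₁ → MemBP P Ω₂ → MemBP P (Ω₁ ∩ Ω₂)

/-- For a finite set `J ⊆ P \ {e}`, `Ω_J = ⋂_{q ∈ J} (P \ qP)`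
(with the convention `Ω_∅ = P`). -/
def OmegaJ {G : Type*} [Group G] (P : Submonoid G) (J : Finset G) : Set G :=
  (P : Set G) ∩ ⋂ q ∈ J, {x | QLe P q x}ᶜ

/-- `w_p = inf { μ(Ω) : Ω ∈ B_P, p ∈ Ω }`. -/
noncomputable def wt {G : Type*} [Group G] (P : Submonoid G) (μ : Set G → ℝ) (p : G) : ℝ :=
  sInf {r : ℝ | ∃ Ω : Set G, MemBP P Ω ∧ p ∈ Ω ∧ μ Ω = r}

set_option linter.unusedSectionVars false

open scoped Classical

section QLAux

variable {G : Type*} [Group G] {P : Submonoid G}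

/- ## Order lemmas -/

lemma qle_refl (g : G) : QLe P g g := by simp [QLe, one_mem]

lemma qle_trans {a b c : G} (h1 : QLe P a b) (h2 : QLe P b c) : QLe P a c := by
  have := mul_mem h1 h2
  simpa [QLe, mul_assoc] using this

lemma qle_mem {p x : G} (hp : p ∈ P) (h : QLe P p x) : x ∈ P := by
  have := mul_mem hp h
  simpa using this

lemma qle_one_iff {x : G} : QLe P 1 x ↔ x ∈ P := by simp [QLe]

lemma qle_antisymm (hQL : QuasiLatticeOrdered P) {a b : G} (h1 : QLe P a b) (h2 : QLe P b a) :
    a = b := by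
  have h3 : (a⁻¹ * b)⁻¹ ∈ P := by simpa [QLe, mul_inv_rev] using h2
  have := hQL.cap _ h1 h3
  have : b = a * 1 := by rw [← this]; group
  simp [this]

lemma exists_finsetJoin (hQL : QuasiLatticeOrdered P) (s : Finset G) (hs : s.Nonempty)
    (x : G) (hx : ∀ p ∈ s, QLe P p x) :
    ∃ b, (∀ p ∈ s, QLe P p b) ∧ ∀ y, (∀ p ∈ s, QLe P p y) → QLe P b y := by
  induction hs using Finset.Nonempty.cons_induction with
  | singleton a =>
    refine ⟨a, fun p hp => ?_, fun y hy => hy a (by simp)⟩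
    rw [Finset.mem_singleton] at hp
    subst hp; exact qle_refl _
  | cons a s ha hs ih =>
    obtain ⟨b, hb1, hb2⟩ := ih fun p hp => hx p (by simp [hp])
    have hax : QLe P a x := hx a (by simp)
    have hbx : QLe P b x := hb2 x fun p hp => hx p (by simp [hp])
    obtain ⟨u, hu⟩ := hQL.lub a b ⟨x, hax, hbx⟩
    refine ⟨u, fun p hp => ?_, fun y hy => ?_⟩
    · rw [Finset.mem_cons] at hp
      rcases hp with rfl | hp
      · exact hu.1
      · exact qle_trans (hb1 p hp) hu.2.1
    · exact hu.2.2 y (hy a (by simp)) (hb2 y fun p hp => hy p (by simp [hp]))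

/- ## Shapes -/

def QSh (P : Submonoid G) (S R : Finset G) : Set G :=
  {x | (∀ p ∈ S, QLe P p x) ∧ ∀ r ∈ R, ¬ QLe P r x}

def Shaped (P : Submonoid G) (A : Set G) : Prop :=
  ∃ S R : Finset G, S.Nonempty ∧ (↑S : Set G) ⊆ (P : Set G) ∧ (↑R : Set G) ⊆ (P : Set G) ∧
    A = QSh P S R

lemma sset_inter (S R S' R' : Finset G) :
    QSh P S R ∩ QSh P S' R' = QSh P (S ∪ S') (R ∪ R') := by
  ext x
  simp only [QSh, Set.mem_inter_iff, Set.mem_setOf_eq, Finset.mem_union]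
  constructor
  · rintro ⟨⟨h1, h2⟩, h3, h4⟩
    exact ⟨fun p hp => hp.elim (h1 p) (h3 p), fun r hr => hr.elim (h2 r) (h4 r)⟩
  · rintro ⟨h1, h2⟩
    exact ⟨⟨fun p hp => h1 p (Or.inl hp), fun r hr => h2 r (Or.inl hr)⟩,
      fun p hp => h1 p (Or.inr hp), fun r hr => h2 r (Or.inr hr)⟩

lemma shaped_empty : Shaped P (∅ : Set G) := by
  refine ⟨{1}, {1}, Finset.singleton_nonempty _, by simpa using P.one_mem,
    by simpa using P.one_mem, ?_⟩
  ext x; simp [QSh]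

lemma shaped_P : Shaped P (P : Set G) := by
  refine ⟨{1}, ∅, Finset.singleton_nonempty _, by simpa using P.one_mem, by simp, ?_⟩
  ext x; simp [QSh, qle_one_iff]

lemma shaped_basic {p : G} (hp : p ∈ P) : Shaped P {x | QLe P p x} := by
  refine ⟨{p}, ∅, Finset.singleton_nonempty _, by simpa, by simp, ?_⟩
  ext x; simp [QSh]

lemma shaped_inter {A B : Set G} (hA : Shaped P A) (hB : Shaped P B) : Shaped P (A ∩ B) := by
  obtain ⟨S, R, hS, hSP, hRP, rfl⟩ := hA
  obtain ⟨S', R', hS', hSP', hRP', rfl⟩ := hB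
  refine ⟨S ∪ S', R ∪ R', hS.mono Finset.subset_union_left, ?_, ?_, sset_inter ..⟩ <;>
    · push_cast; exact Set.union_subset ‹_› ‹_›

lemma sset_subset_P {S R : Finset G} (hS : S.Nonempty) (hSP : (↑S : Set G) ⊆ (P : Set G)) :
    QSh P S R ⊆ (P : Set G) := by
  obtain ⟨p, hp⟩ := hS
  intro x hx
  exact qle_mem (hSP hp) (hx.1 p hp)

lemma shaped_subset_P {A : Set G} (hA : Shaped P A) : A ⊆ (P : Set G) := by
  obtain ⟨S, R, hS, hSP, _, rfl⟩ := hA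
  exact sset_subset_P (R := R) hS hSP

lemma sset_memBP_noR {S : Finset G} (hS : S.Nonempty) (hSP : (↑S : Set G) ⊆ (P : Set G)) :
    MemBP P (QSh P S ∅) := by
  induction hS using Finset.Nonempty.cons_induction with
  | singleton a =>
    have : QSh P {a} (∅ : Finset G) = {x | QLe P a x} := by ext x; simp [QSh]
    rw [this]
    exact MemBP.basic a (hSP (by simp))
  | cons a s ha hs ih =>
    have : QSh P (Finset.cons a s ha) (∅ : Finset G) = {x | QLe P a x} ∩ QSh P s ∅ := by
      ext x
      simp only [QSh, Set.mem_inter_iff, Set.mem_setOf_eq, Finset.mem_cons, Finset.notMem_empty]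
      constructor
      · rintro ⟨h1, -⟩
        exact ⟨h1 a (Or.inl rfl), fun p hp => h1 p (Or.inr hp), by simp⟩
      · rintro ⟨h1, h2, -⟩
        exact ⟨fun p hp => hp.elim (fun h => h ▸ h1) (h2 p), by simp⟩
    rw [this]
    refine MemBP.inter _ _ (MemBP.basic a (hSP (by simp))) (ih ?_)
    intro x hxs
    exact hSP (by simp; exact Or.inr (by exact_mod_cast hxs))

lemma shaped_memBP {A : Set G} (hA : Shaped P A) : MemBP P A := by
  obtain ⟨S, R, hS, hSP, hRP, rfl⟩ := hA
  induction R using Finset.induction_on with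
  | empty => exact sset_memBP_noR hS hSP
  | @insert r R hr ih =>
    have heq : QSh P S (insert r R) = QSh P S R ∩ ((P : Set G) \ {x | QLe P r x}) := by
      ext x
      simp only [QSh, Set.mem_inter_iff, Set.mem_setOf_eq, Set.mem_diff, Finset.mem_insert,
        SetLike.mem_coe]
      constructor
      · rintro ⟨h1, h2⟩
        exact ⟨⟨h1, fun q hq => h2 q (Or.inr hq)⟩,
          sset_subset_P hS hSP (show _ ∈ QSh P S R from ⟨h1, fun q hq => h2 q (Or.inr hq)⟩),
          h2 r (Or.inl rfl)⟩
      · rintro ⟨⟨h1, h2⟩, -, h3⟩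
        exact ⟨h1, fun q hq => hq.elim (fun h => h ▸ h3) (h2 q)⟩
    rw [heq]
    refine MemBP.inter _ _ (ih ?_) (MemBP.compl _ (MemBP.basic r (hRP (by simp))))
    intro x hx
    exact hRP (by simp; exact Or.inr (by exact_mod_cast hx))

lemma shaped_least (hQL : QuasiLatticeOrdered P) {A : Set G} (hA : Shaped P A) {x : G}
    (hx : x ∈ A) : ∃ b ∈ A, ∀ y ∈ A, QLe P b y := by
  obtain ⟨S, R, hS, hSP, hRP, rfl⟩ := hA
  simp only [QSh, Set.mem_setOf_eq] at hx
  obtain ⟨b, hb1, hb2⟩ := exists_finsetJoin hQL S hS x hx.1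
  have hbx : QLe P b x := hb2 x hx.1
  refine ⟨b, ⟨hb1, fun r hr hrb => hx.2 r hr (qle_trans hrb hbx)⟩, fun y hy => ?_⟩
  simp only [QSh, Set.mem_setOf_eq] at hy
  exact hb2 y hy.1

/- ## Good lists -/

def unionL (L : List (Set G)) : Set G := L.foldr (· ∪ ·) ∅

def GoodL (P : Submonoid G) (L : List (Set G)) : Prop :=
  (∀ A ∈ L, Shaped P A) ∧ L.Pairwise Disjoint

lemma unionL_nil : unionL ([] : List (Set G)) = ∅ := rfl

lemma unionL_cons (A : Set G) (L : List (Set G)) : unionL (A :: L) = A ∪ unionL L := rfl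

lemma unionL_append (L M : List (Set G)) : unionL (L ++ M) = unionL L ∪ unionL M := by
  induction L with
  | nil => simp only [List.nil_append, unionL_nil, Set.empty_union]
  | cons A L ih => simp [unionL_cons, ih, Set.union_assoc]

lemma subset_unionL {L : List (Set G)} {A : Set G} (h : A ∈ L) : A ⊆ unionL L := by
  induction L with
  | nil => simp at h
  | cons B L ih =>
    rw [List.mem_cons] at h
    rcases h with rfl | h
    · exact Set.subset_union_left
    · exact (ih h).trans Set.subset_union_right

lemma mem_unionL {L : List (Set G)} {x : G} (h : x ∈ unionL L) : ∃ A ∈ L, x ∈ A := by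
  induction L with
  | nil => simp [unionL_nil] at h
  | cons B L ih =>
    rcases h with h | h
    · exact ⟨B, by simp, h⟩
    · obtain ⟨A, hA, hxA⟩ := ih h
      exact ⟨A, by simp [hA], hxA⟩

lemma unionL_subset {L : List (Set G)} {B : Set G} (h : ∀ A ∈ L, A ⊆ B) : unionL L ⊆ B := by
  intro x hx; obtain ⟨A, hA, hxA⟩ := mem_unionL hx; exact h A hA hxA

lemma goodL_subset_P {L : List (Set G)} (hL : GoodL P L) : unionL L ⊆ (P : Set G) :=
  unionL_subset fun A hA => shaped_subset_P (hL.1 A hA)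

lemma disjoint_unionL {L : List (Set G)} {B : Set G} (h : ∀ A ∈ L, Disjoint B A) :
    Disjoint B (unionL L) := by
  rw [Set.disjoint_right]
  intro x hx hxB
  obtain ⟨A, hA, hxA⟩ := mem_unionL hx
  exact (h A hA).le_bot ⟨hxB, hxA⟩

lemma goodL_memBP {L : List (Set G)} (hL : GoodL P L) : MemBP P (unionL L) := by
  induction L with
  | nil => exact shaped_memBP shaped_empty
  | cons A L ih =>
    exact MemBP.union _ _ (shaped_memBP (hL.1 A (by simp)))
      (ih ⟨fun B hB => hL.1 B (by simp [hB]), hL.2.of_cons⟩)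

/- ## Semiring property: differences -/

def qsat (P : Submonoid G) : G ⊕ G → G → Prop
  | Sum.inl p, x => QLe P p x
  | Sum.inr r, x => ¬ QLe P r x

lemma qsat_inl {p x : G} : qsat P (Sum.inl p) x ↔ QLe P p x := Iff.rfl

lemma qsat_inr {r x : G} : qsat P (Sum.inr r) x ↔ ¬ QLe P r x := Iff.rfl

lemma sset_insert_R [DecidableEq G] {S R : Finset G} (r : G) :
    QSh P S (insert r R) = QSh P S R ∩ {x | ¬ QLe P r x} := by
  ext x
  simp only [QSh, Set.mem_inter_iff, Set.mem_setOf_eq, Finset.mem_insert]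
  constructor
  · rintro ⟨h1, h2⟩
    exact ⟨⟨h1, fun q hq => h2 q (Or.inr hq)⟩, h2 r (Or.inl rfl)⟩
  · rintro ⟨⟨h1, h2⟩, h3⟩
    exact ⟨h1, fun q hq => hq.elim (fun h => h ▸ h3) (h2 q)⟩

lemma sset_insert_S [DecidableEq G] {S R : Finset G} (p : G) :
    QSh P (insert p S) R = QSh P S R ∩ {x | QLe P p x} := by
  ext x
  simp only [QSh, Set.mem_inter_iff, Set.mem_setOf_eq, Finset.mem_insert]
  constructor
  · rintro ⟨h1, h2⟩
    exact ⟨⟨fun q hq => h1 q (Or.inr hq), h2⟩, h1 p (Or.inl rfl)⟩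
  · rintro ⟨⟨h1, h2⟩, h3⟩
    exact ⟨fun q hq => hq.elim (fun h => h ▸ h3) (h1 q), h2⟩

lemma diff_conds : ∀ cs : List (G ⊕ G), (∀ c ∈ cs, Sum.elim id id c ∈ P) →
    ∀ S R : Finset G, S.Nonempty → (↑S : Set G) ⊆ (P : Set G) → (↑R : Set G) ⊆ (P : Set G) →
    ∃ L, GoodL P L ∧ (∀ C ∈ L, C ⊆ QSh P S R) ∧
      QSh P S R \ {x | ∀ c ∈ cs, qsat P c x} = unionL L := by
  intro cs
  induction cs with
  | nil =>
    intro _ S R hS hSP hRP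
    refine ⟨[], ⟨by simp, by simp⟩, by simp, ?_⟩
    simp [unionL_nil]
  | cons c cs ih =>
    intro hc S R hS hSP hRP
    -- head piece H (fails c) and refined shape (satisfies c)
    obtain ⟨H, S', R', hHsh, hSat, hHeq, hSeq⟩ :
        ∃ (H : Set G) (S' R' : Finset G),
          Shaped P H ∧ (S'.Nonempty ∧ (↑S' : Set G) ⊆ (P : Set G) ∧ (↑R' : Set G) ⊆ (P : Set G)) ∧
          H = QSh P S R ∩ {x | ¬ qsat P c x} ∧ QSh P S' R' = QSh P S R ∩ {x | qsat P c x} := by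
      have hcP : Sum.elim id id c ∈ P := hc c (by simp)
      classical
      cases c with
      | inl p =>
        simp only [Sum.elim_inl, id] at hcP
        refine ⟨QSh P S (insert p R), insert p S, R,
          ⟨S, insert p R, hS, hSP, ?_, rfl⟩,
          ⟨Finset.insert_nonempty _ _, ?_, hRP⟩, ?_, ?_⟩
        · push_cast
          exact Set.insert_subset hcP hRP
        · push_cast
          exact Set.insert_subset hcP hSP
        · rw [sset_insert_R]
          rfl
        · rw [sset_insert_S]
          rfl
      | inr r =>
        simp only [Sum.elim_inr, id] at hcP
        refine ⟨QSh P (insert r S) R, S, insert r R,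
          ⟨insert r S, R, Finset.insert_nonempty _ _, ?_, hRP, rfl⟩,
          ⟨hS, hSP, ?_⟩, ?_, ?_⟩
        · push_cast
          exact Set.insert_subset hcP hSP
        · push_cast
          exact Set.insert_subset hcP hRP
        · rw [sset_insert_S]
          ext x
          simp [qsat_inr]
        · rw [sset_insert_R]
          rfl
    obtain ⟨L', hL', hL'sub, hL'eq⟩ := ih (fun c' hc' => hc c' (by simp [hc'])) S' R'
      hSat.1 hSat.2.1 hSat.2.2
    refine ⟨H :: L', ⟨?_, ?_⟩, ?_, ?_⟩
    · intro C hC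
      rw [List.mem_cons] at hC
      rcases hC with rfl | hC
      · exact hHsh
      · exact hL'.1 C hC
    · rw [List.pairwise_cons]
      refine ⟨fun C hC => ?_, hL'.2⟩
      have h1 : C ⊆ QSh P S' R' := hL'sub C hC
      rw [Set.disjoint_left]
      intro x hxH hxC
      have h2 := (hSeq ▸ h1 hxC).2
      have h3 := (hHeq ▸ hxH).2
      exact h3 h2
    · intro C hC
      rw [List.mem_cons] at hC
      rcases hC with rfl | hC
      · rw [hHeq]; exact Set.inter_subset_left
      · exact (hL'sub C hC).trans (by rw [hSeq]; exact Set.inter_subset_left)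
    · rw [unionL_cons, ← hL'eq, hHeq, hSeq]
      ext x
      simp only [Set.mem_diff, Set.mem_setOf_eq, Set.mem_union, Set.mem_inter_iff,
        List.mem_cons]
      constructor
      · rintro ⟨hxA, hn⟩
        by_cases hcx : qsat P c x
        · exact Or.inr ⟨⟨hxA, hcx⟩, fun h => hn fun c' hc' => hc'.elim (fun h' => h' ▸ hcx) (h c')⟩
        · exact Or.inl ⟨hxA, hcx⟩
      · rintro (⟨hxA, hcx⟩ | ⟨⟨hxA, hcx⟩, hn⟩)
        · exact ⟨hxA, fun h => hcx (h c (Or.inl rfl))⟩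
        · exact ⟨hxA, fun h => hn fun c' hc' => h c' (Or.inr hc')⟩

lemma shaped_diff {A B : Set G} (hA : Shaped P A) (hB : Shaped P B) :
    ∃ L, GoodL P L ∧ (∀ C ∈ L, C ⊆ A) ∧ A \ B = unionL L := by
  obtain ⟨S, R, hS, hSP, hRP, rfl⟩ := hA
  obtain ⟨S', R', hS', hSP', hRP', rfl⟩ := hB
  classical
  set cs : List (G ⊕ G) := S'.toList.map Sum.inl ++ R'.toList.map Sum.inr with hcs
  have hcsP : ∀ c ∈ cs, Sum.elim id id c ∈ P := by
    intro c hcm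
    rw [hcs, List.mem_append] at hcm
    rcases hcm with hcm | hcm <;> rw [List.mem_map] at hcm <;> obtain ⟨a, ha, rfl⟩ := hcm
    · exact hSP' (by simpa using ha)
    · exact hRP' (by simpa using ha)
  have hBeq : QSh P S' R' = {x | ∀ c ∈ cs, qsat P c x} := by
    ext x
    simp only [QSh, Set.mem_setOf_eq, hcs, List.mem_append, List.mem_map, Finset.mem_toList]
    constructor
    · rintro ⟨h1, h2⟩ c (⟨a, ha, rfl⟩ | ⟨a, ha, rfl⟩)
      · exact h1 a ha
      · exact h2 a ha
    · intro h
      exact ⟨fun p hp => h (Sum.inl p) (Or.inl ⟨p, hp, rfl⟩),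
        fun r hr => h (Sum.inr r) (Or.inr ⟨r, hr, rfl⟩)⟩
  obtain ⟨L, h1, h2, h3⟩ := diff_conds cs hcsP S R hS hSP hRP
  exact ⟨L, h1, h2, by rw [hBeq]; exact h3⟩

lemma goodL_diff_shaped {L : List (Set G)} (hL : GoodL P L) {B : Set G} (hB : Shaped P B) :
    ∃ L', GoodL P L' ∧ (∀ C ∈ L', ∃ A ∈ L, C ⊆ A) ∧ unionL L' = unionL L \ B := by
  induction L with
  | nil => exact ⟨[], ⟨by simp, by simp⟩, by simp, by simp [unionL_nil]⟩
  | cons A L ih =>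
    obtain ⟨L', h1, h2, h3⟩ := ih ⟨fun C hC => hL.1 C (by simp [hC]), hL.2.of_cons⟩
    obtain ⟨LA, hLA, hLAsub, hLAeq⟩ := shaped_diff (hL.1 A (by simp)) hB
    refine ⟨LA ++ L', ⟨?_, ?_⟩, ?_, ?_⟩
    · intro C hC
      rw [List.mem_append] at hC
      exact hC.elim (hLA.1 C) (h1.1 C)
    · rw [List.pairwise_append]
      refine ⟨hLA.2, h1.2, fun C hC C' hC' => ?_⟩
      obtain ⟨A', hA', hCA'⟩ := h2 C' hC'
      have hdisj : Disjoint A A' := (List.pairwise_cons.1 hL.2).1 A' hA'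
      exact Set.disjoint_of_subset (hLAsub C hC) hCA' hdisj
    · intro C hC
      rw [List.mem_append] at hC
      rcases hC with hC | hC
      · exact ⟨A, by simp, hLAsub C hC⟩
      · obtain ⟨A', hA', hCA'⟩ := h2 C hC
        exact ⟨A', by simp [hA'], hCA'⟩
    · rw [unionL_append, ← hLAeq, h3, unionL_cons, Set.union_diff_distrib]

lemma goodL_diff_goodL {L M : List (Set G)} (hL : GoodL P L) (hM : GoodL P M) :
    ∃ L', GoodL P L' ∧ (∀ C ∈ L', ∃ A ∈ L, C ⊆ A) ∧ unionL L' = unionL L \ unionL M := by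
  induction M generalizing L with
  | nil =>
    exact ⟨L, hL, fun C hC => ⟨C, hC, subset_rfl⟩, by simp [unionL_nil]⟩
  | cons B M ih =>
    obtain ⟨L1, h1, h2, h3⟩ := goodL_diff_shaped hL (hM.1 B (by simp))
    obtain ⟨L2, h4, h5, h6⟩ := ih h1 ⟨fun C hC => hM.1 C (by simp [hC]), hM.2.of_cons⟩
    refine ⟨L2, h4, fun C hC => ?_, ?_⟩
    · obtain ⟨A1, hA1, hCA1⟩ := h5 C hC
      obtain ⟨A, hA, hA1A⟩ := h2 A1 hA1
      exact ⟨A, hA, hCA1.trans hA1A⟩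
    · rw [h6, h3, unionL_cons, Set.diff_diff]

lemma goodL_compl {L : List (Set G)} (hL : GoodL P L) :
    ∃ L', GoodL P L' ∧ unionL L' = (P : Set G) \ unionL L := by
  obtain ⟨L', h1, _, h3⟩ := goodL_diff_goodL (L := [(P : Set G)])
    ⟨fun A hA => by rw [List.mem_singleton] at hA; exact hA ▸ shaped_P, by simp⟩ hL
  refine ⟨L', h1, ?_⟩
  rw [h3]
  congr 1
  simp [unionL_cons, unionL_nil]

lemma goodL_union {L M : List (Set G)} (hL : GoodL P L) (hM : GoodL P M) :
    ∃ N, GoodL P N ∧ unionL N = unionL L ∪ unionL M := by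
  obtain ⟨M', h1, h2, h3⟩ := goodL_diff_goodL hM hL
  refine ⟨L ++ M', ⟨?_, ?_⟩, ?_⟩
  · intro C hC
    rw [List.mem_append] at hC
    exact hC.elim (hL.1 C) (h1.1 C)
  · rw [List.pairwise_append]
    refine ⟨hL.2, h1.2, fun A hA C hC => ?_⟩
    have hCsub : C ⊆ unionL M \ unionL L := h3 ▸ subset_unionL hC
    rw [Set.disjoint_right]
    intro x hxC hxA
    exact (hCsub hxC).2 (subset_unionL hA hxA)
  · rw [unionL_append, h3, Set.union_diff_self]

lemma goodL_inter {L M : List (Set G)} (hL : GoodL P L) (hM : GoodL P M) :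
    ∃ N, GoodL P N ∧ unionL N = unionL L ∩ unionL M := by
  obtain ⟨Mc, h1, h2⟩ := goodL_compl hM
  obtain ⟨N, h3, _, h5⟩ := goodL_diff_goodL hL h1
  refine ⟨N, h3, ?_⟩
  rw [h5, h2]
  ext x
  simp only [Set.mem_diff, Set.mem_inter_iff, SetLike.mem_coe]
  constructor
  · rintro ⟨hxL, hn⟩
    refine ⟨hxL, by_contra fun hxM => hn ⟨goodL_subset_P hL hxL, hxM⟩⟩
  · rintro ⟨hxL, hxM⟩
    exact ⟨hxL, fun h => h.2 hxM⟩

lemma memBP_goodL {Ω : Set G} (hΩ : MemBP P Ω) : ∃ L, GoodL P L ∧ Ω = unionL L := by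
  induction hΩ with
  | basic p hp =>
    refine ⟨[{x | QLe P p x}], ⟨?_, by simp⟩, ?_⟩
    · intro A hA
      rw [List.mem_singleton] at hA
      exact hA ▸ shaped_basic hp
    · simp [unionL_cons, unionL_nil]
  | compl Ω hΩ ih =>
    obtain ⟨L, hL, rfl⟩ := ih
    obtain ⟨L', h1, h2⟩ := goodL_compl hL
    exact ⟨L', h1, h2.symm⟩
  | union Ω₁ Ω₂ h1 h2 ih1 ih2 =>
    obtain ⟨L, hL, rfl⟩ := ih1
    obtain ⟨M, hM, rfl⟩ := ih2
    obtain ⟨N, h3, h4⟩ := goodL_union hL hM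
    exact ⟨N, h3, h4.symm⟩
  | inter Ω₁ Ω₂ h1 h2 ih1 ih2 =>
    obtain ⟨L, hL, rfl⟩ := ih1
    obtain ⟨M, hM, rfl⟩ := ih2
    obtain ⟨N, h3, h4⟩ := goodL_inter hL hM
    exact ⟨N, h3, h4.symm⟩

lemma memBP_subset_P {Ω : Set G} (hΩ : MemBP P Ω) : Ω ⊆ (P : Set G) := by
  obtain ⟨L, hL, rfl⟩ := memBP_goodL hΩ
  exact goodL_subset_P hL

end QLAux

section QLMeasure

variable {G : Type*} [Group G] {P : Submonoid G} {μ : Set G → ℝ}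
variable (hQL : QuasiLatticeOrdered P)
variable (hpos : ∀ Ω : Set G, MemBP P Ω → 0 ≤ μ Ω)
variable (hadd : ∀ Ω₁ Ω₂ : Set G, MemBP P Ω₁ → MemBP P Ω₂ → Disjoint Ω₁ Ω₂ →
      μ (Ω₁ ∪ Ω₂) = μ Ω₁ + μ Ω₂)
variable (hsum : Summable fun p : P => μ {x | QLe P (p : G) x})

include hadd in
lemma mu_empty : μ (∅ : Set G) = 0 := by
  have h := hadd ∅ ∅ (shaped_memBP shaped_empty) (shaped_memBP shaped_empty) (by simp)
  simp at h
  linarith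

include hpos hadd in
lemma mu_mono {A B : Set G} (hA : MemBP P A) (hB : MemBP P B) (hAB : A ⊆ B) : μ A ≤ μ B := by
  have hBA : MemBP P (B ∩ ((P : Set G) \ A)) := MemBP.inter _ _ hB (MemBP.compl _ hA)
  have hU : B = A ∪ (B ∩ ((P : Set G) \ A)) := by
    apply Set.eq_of_subset_of_subset
    · intro x hx
      by_cases hxA : x ∈ A
      · exact Or.inl hxA
      · exact Or.inr ⟨hx, memBP_subset_P hB hx, hxA⟩
    · rintro x (hx | hx)
      · exact hAB hx
      · exact hx.1
  have hd : Disjoint A (B ∩ ((P : Set G) \ A)) := by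
    rw [Set.disjoint_left]; rintro x hx ⟨-, -, hx'⟩; exact hx' hx
  have := hadd _ _ hA hBA hd
  rw [← hU] at this
  have := hpos _ hBA
  linarith

lemma memBP_biUnion {ι : Type*} (t : Finset ι) (f : ι → Set G) (hm : ∀ i ∈ t, MemBP P (f i)) :
    MemBP P (⋃ i ∈ t, f i) := by
  classical
  induction t using Finset.induction_on with
  | empty => simpa using shaped_memBP (shaped_empty (P := P))
  | @insert a t ha ih =>
    rw [Finset.set_biUnion_insert]
    exact MemBP.union _ _ (hm a (by simp)) (ih fun i hi => hm i (by simp [hi]))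

include hpos hadd in
lemma mu_biUnion {ι : Type*} (t : Finset ι) (f : ι → Set G) (hm : ∀ i ∈ t, MemBP P (f i))
    (hd : (↑t : Set ι).PairwiseDisjoint f) : μ (⋃ i ∈ t, f i) = ∑ i ∈ t, μ (f i) := by
  classical
  induction t using Finset.induction_on with
  | empty => simp [mu_empty hadd]
  | @insert a t ha ih =>
    rw [Finset.set_biUnion_insert, Finset.sum_insert ha]
    have hmt : ∀ i ∈ t, MemBP P (f i) := fun i hi => hm i (by simp [hi])
    have hdt : (↑t : Set ι).PairwiseDisjoint f := hd.subset (by simp)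
    rw [← ih hmt hdt]
    refine hadd _ _ (hm a (by simp)) (memBP_biUnion t f hmt) ?_
    refine Set.disjoint_iUnion₂_right.2 fun i hi => ?_
    exact hd (by simp) (by simp [hi]) (fun h => ha (h ▸ hi))

/- ## Weights -/

include hpos in
lemma wt_nonneg (p : G) : 0 ≤ wt P μ p := by
  apply Real.sInf_nonneg
  rintro x ⟨Ω, hΩ, -, rfl⟩
  exact hpos _ hΩ

include hpos in
lemma wt_le {p : G} {Ω : Set G} (hΩ : MemBP P Ω) (hp : p ∈ Ω) : wt P μ p ≤ μ Ω := by
  apply csInf_le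
  · exact ⟨0, by rintro x ⟨Ω', hΩ', -, rfl⟩; exact hpos _ hΩ'⟩
  · exact ⟨Ω, hΩ, hp, rfl⟩

include hpos in
lemma wt_lt {p : G} (hp : p ∈ P) {c : ℝ} (hc : wt P μ p < c) :
    ∃ Ω : Set G, MemBP P Ω ∧ p ∈ Ω ∧ μ Ω < c := by
  have hne : {r : ℝ | ∃ Ω : Set G, MemBP P Ω ∧ p ∈ Ω ∧ μ Ω = r}.Nonempty := by
    refine ⟨μ (P : Set G), (P : Set G), shaped_memBP shaped_P, hp, rfl⟩
  obtain ⟨r, ⟨Ω, hΩ, hpΩ, rfl⟩, hr⟩ := exists_lt_of_csInf_lt hne hc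
  exact ⟨Ω, hΩ, hpΩ, hr⟩

noncomputable def wsum (P : Submonoid G) (μ : Set G → ℝ) (A : Set G) : ℝ :=
  ∑' p : A, wt P μ (p : G)

include hpos hsum in
lemma wsummable {A : Set G} (hA : A ⊆ (P : Set G)) : Summable fun p : A => wt P μ (p : G) := by
  have hinj : Function.Injective (fun q : A => (⟨q, hA q.2⟩ : P)) := by
    intro a b h
    exact Subtype.ext (by simpa using congrArg Subtype.val h)
  refine Summable.of_nonneg_of_le (fun q => wt_nonneg hpos _) (fun q => ?_)
    (hsum.comp_injective hinj)
  exact wt_le hpos (MemBP.basic _ (hA q.2)) (qle_refl _)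

include hpos hsum in
lemma wsum_nonneg {A : Set G} (hA : A ⊆ (P : Set G)) : 0 ≤ wsum P μ A :=
  tsum_nonneg fun q => wt_nonneg hpos _

include hpos hsum in
lemma wsum_union {A B : Set G} (hA : A ⊆ (P : Set G)) (hB : B ⊆ (P : Set G))
    (hd : Disjoint A B) : wsum P μ (A ∪ B) = wsum P μ A + wsum P μ B :=
  Summable.tsum_union_disjoint hd (wsummable hpos hsum hA) (wsummable hpos hsum hB)

include hpos hsum in
lemma wsum_mono {A B : Set G} (hB : B ⊆ (P : Set G)) (hAB : A ⊆ B) :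
    wsum P μ A ≤ wsum P μ B := by
  have h1 : B = A ∪ (B \ A) := (Set.union_diff_cancel hAB).symm
  have h2 := wsum_union hpos hsum (hAB.trans hB) ((Set.diff_subset).trans hB)
    (Set.disjoint_sdiff_right (s := A) (t := B))
  rw [← h1] at h2
  have := wsum_nonneg hpos hsum (A := B \ A) ((Set.diff_subset).trans hB)
  linarith

include hpos hsum in
lemma wt_le_wsum {A : Set G} (hA : A ⊆ (P : Set G)) {b : G} (hb : b ∈ A) :
    wt P μ b ≤ wsum P μ A :=
  Summable.le_tsum (wsummable hpos hsum hA) ⟨b, hb⟩ (fun _ _ => wt_nonneg hpos _)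

include hpos hsum in
lemma wsum_biUnion {ι : Type*} (t : Finset ι) (f : ι → Set G) (hm : ∀ i ∈ t, f i ⊆ (P : Set G))
    (hd : (↑t : Set ι).PairwiseDisjoint f) :
    wsum P μ (⋃ i ∈ t, f i) = ∑ i ∈ t, wsum P μ (f i) := by
  classical
  induction t using Finset.induction_on with
  | empty => simp [wsum, tsum_empty]
  | @insert a t ha ih =>
    rw [Finset.set_biUnion_insert, Finset.sum_insert ha]
    have hmt : ∀ i ∈ t, f i ⊆ (P : Set G) := fun i hi => hm i (by simp [hi])
    have hdt : (↑t : Set ι).PairwiseDisjoint f := hd.subset (by simp)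
    rw [← ih hmt hdt]
    refine wsum_union hpos hsum (hm a (by simp)) (Set.iUnion₂_subset hmt) ?_
    refine Set.disjoint_iUnion₂_right.2 fun i hi => ?_
    exact hd (by simp) (by simp [hi]) (fun h => ha (h ▸ hi))

include hpos hsum in
lemma wsum_unionL {L : List (Set G)} (hL : GoodL P L) :
    wsum P μ (unionL L) = (L.map (wsum P μ)).sum := by
  induction L with
  | nil => simp [unionL_nil, wsum, tsum_empty]
  | cons A L ih =>
    have hLt : GoodL P L := ⟨fun B hB => hL.1 B (by simp [hB]), hL.2.of_cons⟩
    rw [unionL_cons, List.map_cons, List.sum_cons, ← ih hLt]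
    exact wsum_union hpos hsum (shaped_subset_P (hL.1 A (by simp))) (goodL_subset_P hLt)
      (disjoint_unionL (List.pairwise_cons.1 hL.2).1)

include hpos hadd in
lemma mu_unionL' {L : List (Set G)} (hL : GoodL P L) :
    μ (unionL L) = (L.map μ).sum := by
  induction L with
  | nil => simp [unionL_nil, mu_empty hadd]
  | cons A L ih =>
    have hLt : GoodL P L := ⟨fun B hB => hL.1 B (by simp [hB]), hL.2.of_cons⟩
    rw [unionL_cons, List.map_cons, List.sum_cons, ← ih hLt]
    exact hadd _ _ (shaped_memBP (hL.1 A (by simp))) (goodL_memBP hLt)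
      (disjoint_unionL (List.pairwise_cons.1 hL.2).1)

/- ## Upper bound -/

lemma memBP_inter_biInter {ι : Type*} {A : Set G} (hA : MemBP P A) (t : Finset ι)
    (f : ι → Set G) (hm : ∀ i ∈ t, MemBP P (f i)) : MemBP P (A ∩ ⋂ i ∈ t, f i) := by
  classical
  induction t using Finset.induction_on generalizing A with
  | empty => simpa using hA
  | @insert a t ha ih =>
    have heq : A ∩ ⋂ i ∈ insert a t, f i = (A ∩ f a) ∩ ⋂ i ∈ t, f i := by
      rw [Finset.set_biInter_insert, ← Set.inter_assoc]
    rw [heq]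
    exact ih (MemBP.inter _ _ hA (hm a (by simp))) fun i hi => hm i (by simp [hi])

noncomputable def qK (P : Submonoid G) (p p' : G) : Set G :=
  if h : ∃ u, QLub P p p' u ∧ u ≠ p then ((P : Set G) \ {x | QLe P h.choose x}) else (P : Set G)

lemma qK_memBP {p p' : G} (hp : p ∈ P) : MemBP P (qK P p p') := by
  rw [qK]
  split_ifs with h
  · exact MemBP.compl _ (MemBP.basic _ (qle_mem hp h.choose_spec.1.1))
  · have : (P : Set G) = {x | QLe P (1 : G) x} := by ext x; simp [qle_one_iff]
    rw [this]
    exact MemBP.basic _ P.one_mem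

lemma qK_self (hQL : QuasiLatticeOrdered P) {p : G} (p' : G) (hp : p ∈ P) : p ∈ qK P p p' := by
  rw [qK]
  split_ifs with h
  · refine ⟨hp, fun hle => ?_⟩
    exact h.choose_spec.2 (qle_antisymm hQL h.choose_spec.1.1 hle).symm
  · exact hp

lemma qK_disj (hQL : QuasiLatticeOrdered P) {p p' x : G} (hne : p ≠ p')
    (hx1 : QLe P p x) (hx2 : QLe P p' x) : x ∉ qK P p p' ∨ x ∉ qK P p' p := by
  obtain ⟨u, hu⟩ := hQL.lub p p' ⟨x, hx1, hx2⟩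
  have hux : QLe P u x := hu.2.2 x hx1 hx2
  by_cases hup : u = p
  · right
    have hex : ∃ v, QLub P p' p v ∧ v ≠ p' := by
      refine ⟨u, ⟨hu.2.1, hu.1, fun v h1 h2 => hu.2.2 v h2 h1⟩, fun h => hne (by rw [← hup, h])⟩
    rw [qK, dif_pos hex]
    intro hmem
    refine hmem.2 ?_
    have hc := hex.choose_spec.1
    exact hc.2.2 x hx2 hx1
  · left
    have hex : ∃ v, QLub P p p' v ∧ v ≠ p := ⟨u, hu, hup⟩
    rw [qK, dif_pos hex]
    intro hmem
    refine hmem.2 ?_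
    have hc := hex.choose_spec.1
    exact hc.2.2 x hx1 hx2

include hQL hpos hadd hsum in
lemma qlm_upper {Ω : Set G} (hΩ : MemBP P Ω) : wsum P μ Ω ≤ μ Ω := by
  classical
  have hΩP := memBP_subset_P hΩ
  apply Summable.tsum_le_of_sum_le (wsummable hpos hsum hΩP)
  intro s
  set t : Finset G := s.image (fun q : Ω => (q : G)) with ht
  have hsum_eq : ∑ i ∈ s, wt P μ (i : G) = ∑ p ∈ t, wt P μ p := by
    rw [ht]
    rw [Finset.sum_image (fun a _ b _ h => Subtype.ext h)]
  rw [hsum_eq]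
  have htΩ : ∀ p ∈ t, p ∈ Ω := by
    intro p hp
    rw [ht, Finset.mem_image] at hp
    obtain ⟨q, _, rfl⟩ := hp
    exact q.2
  set N : G → Set G := fun p => Ω ∩ ({x | QLe P p x} ∩ ⋂ p' ∈ t.erase p, qK P p p') with hN
  have hNmem : ∀ p ∈ t, MemBP P (N p) := by
    intro p hp
    have : N p = (Ω ∩ {x | QLe P p x}) ∩ ⋂ p' ∈ t.erase p, qK P p p' := by
      rw [hN, Set.inter_assoc]
    rw [this]
    exact memBP_inter_biInter (MemBP.inter _ _ hΩ (MemBP.basic _ (hΩP (htΩ p hp)))) _ _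
      fun p' _ => qK_memBP (hΩP (htΩ p hp))
  have hpN : ∀ p ∈ t, p ∈ N p := by
    intro p hp
    refine ⟨htΩ p hp, qle_refl _, ?_⟩
    exact Set.mem_iInter₂.2 fun p' _ => qK_self hQL p' (hΩP (htΩ p hp))
  have hNsub : ∀ p, N p ⊆ Ω := fun p => Set.inter_subset_left
  have hNd : (↑t : Set G).PairwiseDisjoint N := by
    intro p hp q hq hpq
    rw [Function.onFun, Set.disjoint_left]
    intro x hxp hxq
    have h1 : QLe P p x := hxp.2.1
    have h2 : QLe P q x := hxq.2.1
    have h3 : x ∈ qK P p q := Set.mem_iInter₂.1 hxp.2.2 q (Finset.mem_erase.2 ⟨Ne.symm hpq, hq⟩)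
    have h4 : x ∈ qK P q p := Set.mem_iInter₂.1 hxq.2.2 p (Finset.mem_erase.2 ⟨hpq, hp⟩)
    rcases qK_disj hQL hpq h1 h2 with h | h
    · exact h h3
    · exact h h4
  calc ∑ p ∈ t, wt P μ p ≤ ∑ p ∈ t, μ (N p) :=
        Finset.sum_le_sum fun p hp => wt_le hpos (hNmem p hp) (hpN p hp)
    _ = μ (⋃ p ∈ t, N p) := (mu_biUnion hpos hadd t N hNmem hNd).symm
    _ ≤ μ Ω := mu_mono hpos hadd (memBP_biUnion t N hNmem) hΩ
        (Set.iUnion₂_subset fun p _ => hNsub p)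

/- ## Lower bound -/

include hQL hpos hadd in
lemma children_bound : ∀ Lc : List (Set G), GoodL P Lc →
    ∃ bs : Finset G, (↑bs : Set G) ⊆ unionL Lc ∧
      μ (unionL Lc) ≤ ∑ r ∈ bs, μ {x | QLe P r x} := by
  classical
  intro Lc
  induction Lc with
  | nil =>
    intro _
    exact ⟨∅, by simp [unionL_nil], by simp [unionL_nil, mu_empty hadd]⟩
  | cons C L ih =>
    intro hLc
    have hLt : GoodL P L := ⟨fun B hB => hLc.1 B (by simp [hB]), hLc.2.of_cons⟩
    obtain ⟨bs, hsub, hbd⟩ := ih hLt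
    have hCd : Disjoint C (unionL L) := disjoint_unionL (List.pairwise_cons.1 hLc.2).1
    have hCsh : Shaped P C := hLc.1 C (by simp)
    have hmuU : μ (unionL (C :: L)) = μ C + μ (unionL L) :=
      hadd _ _ (shaped_memBP hCsh) (goodL_memBP hLt) hCd
    rcases C.eq_empty_or_nonempty with rfl | ⟨x, hx⟩
    · refine ⟨bs, ?_, ?_⟩
      · rw [unionL_cons]
        exact hsub.trans Set.subset_union_right
      · rw [hmuU, mu_empty hadd]
        linarith
    · obtain ⟨r, hrC, hrle⟩ := shaped_least hQL hCsh hx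
      have hrP : r ∈ P := shaped_subset_P hCsh hrC
      have hCsub : C ⊆ {y | QLe P r y} := fun y hy => hrle y hy
      have hrbs : r ∉ bs := by
        intro h
        exact (Set.disjoint_left.1 hCd) hrC (hsub h)
      refine ⟨insert r bs, ?_, ?_⟩
      · rw [unionL_cons]
        push_cast
        exact Set.insert_subset (Or.inl hrC) (hsub.trans Set.subset_union_right)
      · rw [hmuU, Finset.sum_insert hrbs]
        have h1 : μ C ≤ μ {x | QLe P r x} :=
          mu_mono hpos hadd (shaped_memBP hCsh) (MemBP.basic _ hrP) hCsub
        linarith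

include hQL hpos hadd hsum in
lemma atom_step {B : Set G} (hB : Shaped P B) (hne : B.Nonempty) {ε' : ℝ} (hε' : 0 < ε') :
    ∃ (b : G) (B' : Set G) (bs : Finset G),
      Shaped P B' ∧ B' ⊆ B ∧ b ∈ B' ∧ (∀ y ∈ B, QLe P b y) ∧
      μ B' < wt P μ b + ε' ∧
      (↑bs : Set G) ⊆ B \ B' ∧ MemBP P (B \ B') ∧
      μ (B \ B') ≤ ∑ r ∈ bs, μ {x | QLe P r x} := by
  obtain ⟨x0, hx0⟩ := hne
  obtain ⟨b, hbB, hbleast⟩ := shaped_least hQL hB hx0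
  have hbP : b ∈ P := shaped_subset_P hB hbB
  obtain ⟨W, hW, hbW, hWlt⟩ := wt_lt hpos hbP (show wt P μ b < wt P μ b + ε' by linarith)
  obtain ⟨LW, hLW, rfl⟩ := memBP_goodL hW
  obtain ⟨C, hCL, hbC⟩ := mem_unionL hbW
  have hCsh : Shaped P C := hLW.1 C hCL
  have hB'sh : Shaped P (B ∩ C) := shaped_inter hB hCsh
  have h1 : μ (B ∩ C) ≤ μ (unionL LW) :=
    mu_mono hpos hadd (shaped_memBP hB'sh) (goodL_memBP hLW)
      (Set.inter_subset_right.trans (subset_unionL hCL))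
  have hdiff : B \ (B ∩ C) = B \ C := by
    ext x; simp only [Set.mem_diff, Set.mem_inter_iff]; tauto
  obtain ⟨Lc, hLc, hLcsub, hLceq⟩ := shaped_diff hB hCsh
  obtain ⟨bs, hbs_sub, hbs_bound⟩ := children_bound hQL hpos hadd Lc hLc
  refine ⟨b, B ∩ C, bs, hB'sh, Set.inter_subset_left, ⟨hbB, hbC⟩, hbleast, by linarith, ?_, ?_, ?_⟩
  · rw [hdiff, hLceq]
    exact hbs_sub
  · rw [hdiff, hLceq]
    exact goodL_memBP hLc
  · rw [hdiff, hLceq]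
    exact hbs_bound

include hQL hpos hadd hsum in
lemma qlm_lower {A : Set G} (hA : Shaped P A) : μ A ≤ wsum P μ A := by
  classical
  have key : ∀ ε : ℝ, 0 < ε → μ A ≤ wsum P μ A + (ε + ε) := by
    intro ε hε
    obtain ⟨F, hF⟩ := summable_iff_vanishing.1 hsum (Metric.ball 0 ε) (Metric.ball_mem_nhds _ hε)
    set F' : Finset G := F.image (fun q : P => (q : G)) with hF'def
    have hF'P : (↑F' : Set G) ⊆ (P : Set G) := by
      intro x hx
      rw [Finset.mem_coe, hF'def, Finset.mem_image] at hx
      obtain ⟨q, _, rfl⟩ := hx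
      exact q.2
    have hFvan : ∀ bsu : Finset G, (↑bsu : Set G) ⊆ (P : Set G) → (∀ r ∈ bsu, r ∉ F') →
        ∑ r ∈ bsu, μ {x | QLe P r x} < ε := by
      intro bsu hbsP hbsF
      set f : {r // r ∈ bsu} → P := fun r => ⟨r.1, hbsP (Finset.mem_coe.2 r.2)⟩ with hf
      set T : Finset P := bsu.attach.image f with hT
      have hTd : Disjoint T F := by
        rw [Finset.disjoint_left]
        rintro a ha haF
        rw [hT, Finset.mem_image] at ha
        obtain ⟨r, _, rfl⟩ := ha
        refine hbsF r.1 r.2 ?_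
        rw [hF'def, Finset.mem_image]
        exact ⟨f r, haF, rfl⟩
      have hball := hF T hTd
      rw [Metric.mem_ball, dist_zero_right] at hball
      have hEq : ∑ b ∈ T, μ {x | QLe P (b : G) x} = ∑ r ∈ bsu, μ {x | QLe P r x} := by
        rw [hT, Finset.sum_image (fun a _ b _ h => by
          apply Subtype.ext
          have := congrArg Subtype.val h
          simpa [hf] using this)]
        rw [← Finset.sum_attach bsu (fun r => μ {x | QLe P r x})]
      calc ∑ r ∈ bsu, μ {x | QLe P r x} = ∑ b ∈ T, μ {x | QLe P (b : G) x} := hEq.symm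
        _ ≤ |∑ b ∈ T, μ {x | QLe P (b : G) x}| := le_abs_self _
        _ < ε := by simpa using hball
    obtain ⟨S, R, hS, hSP, hRP, hAeq⟩ := hA
    subst hAeq
    set atom : Finset G → Set G := fun T => QSh P (S ∪ T) (R ∪ (F' \ T)) with hatomdef
    have hatom_sh : ∀ T ∈ F'.powerset, Shaped P (atom T) := by
      intro T hT
      rw [Finset.mem_powerset] at hT
      refine ⟨S ∪ T, R ∪ (F' \ T), hS.mono Finset.subset_union_left, ?_, ?_, rfl⟩
      · push_cast
        exact Set.union_subset hSP ((Finset.coe_subset.2 hT).trans hF'P)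
      · push_cast
        exact Set.union_subset hRP (Set.diff_subset.trans hF'P)
    have hatom_d : (↑F'.powerset : Set (Finset G)).PairwiseDisjoint atom := by
      intro T hT T' hT' hne
      rw [Finset.mem_coe, Finset.mem_powerset] at hT hT'
      rw [Function.onFun, Set.disjoint_left]
      intro x hx hx'
      simp only [hatomdef, QSh, Set.mem_setOf_eq] at hx hx'
      by_cases hTT' : T ⊆ T'
      · obtain ⟨g, hg1, hg2⟩ := Finset.exists_of_ssubset (ssubset_of_subset_of_ne hTT' hne)
        exact hx.2 g (Finset.mem_union_right _ (Finset.mem_sdiff.2 ⟨hT' hg1, hg2⟩))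
          (hx'.1 g (Finset.mem_union_right _ hg1))
      · obtain ⟨g, hg1, hg2⟩ := Finset.not_subset.1 hTT'
        exact hx'.2 g (Finset.mem_union_right _ (Finset.mem_sdiff.2 ⟨hT hg1, hg2⟩))
          (hx.1 g (Finset.mem_union_right _ hg1))
    have hcover : ⋃ T ∈ F'.powerset, atom T = QSh P S R := by
      ext x
      simp only [Set.mem_iUnion, exists_prop]
      constructor
      · rintro ⟨T, hT, hx⟩
        simp only [hatomdef, QSh, Set.mem_setOf_eq] at hx
        exact ⟨fun p hp => hx.1 p (Finset.mem_union_left _ hp),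
          fun r hr => hx.2 r (Finset.mem_union_left _ hr)⟩
      · intro hx
        refine ⟨F'.filter (fun g => QLe P g x), Finset.mem_powerset.2 (Finset.filter_subset _ _), ?_⟩
        simp only [hatomdef, QSh, Set.mem_setOf_eq]
        constructor
        · intro p hp
          rcases Finset.mem_union.1 hp with hp | hp
          · exact hx.1 p hp
          · exact (Finset.mem_filter.1 hp).2
        · intro r hr
          rcases Finset.mem_union.1 hr with hr | hr
          · exact hx.2 r hr
          · have h := Finset.mem_sdiff.1 hr
            exact fun hle => h.2 (Finset.mem_filter.2 ⟨h.1, hle⟩)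
    have hmuA : μ (QSh P S R) = ∑ T ∈ F'.powerset, μ (atom T) := by
      rw [← hcover]
      exact mu_biUnion hpos hadd _ _ (fun T hT => shaped_memBP (hatom_sh T hT)) hatom_d
    have hwA : wsum P μ (QSh P S R) = ∑ T ∈ F'.powerset, wsum P μ (atom T) := by
      rw [← hcover]
      exact wsum_biUnion hpos hsum _ _ (fun T hT => shaped_subset_P (hatom_sh T hT)) hatom_d
    have hk0 : 0 < ((F'.powerset.card : ℕ) : ℝ) := by
      have : 0 < F'.powerset.card := Finset.card_pos.2 ⟨∅, Finset.empty_mem_powerset _⟩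
      exact_mod_cast this
    set ε' : ℝ := ε / F'.powerset.card with hε'def
    have hε'pos : 0 < ε' := by positivity
    have hkey : ∀ T : Finset G, ∃ bsT : Finset G, T ∈ F'.powerset →
        (↑bsT : Set G) ⊆ atom T ∧ (∀ r ∈ bsT, r ∉ F') ∧
        μ (atom T) ≤ wsum P μ (atom T) + ε' + ∑ r ∈ bsT, μ {x | QLe P r x} := by
      intro T
      by_cases hT : T ∈ F'.powerset
      swap
      · exact ⟨∅, fun h => absurd h hT⟩
      rcases (atom T).eq_empty_or_nonempty with he | hne
      · refine ⟨∅, fun _ => ⟨by simp, by simp, ?_⟩⟩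
        rw [he, mu_empty hadd]
        have hw0 : wsum P μ (∅ : Set G) = 0 := by simp [wsum, tsum_empty]
        rw [hw0]
        simp
        positivity
      · obtain ⟨b, B', bsT, hB'sh, hB'sub, hbB', hbleast, hmuB', hbs_sub, hmemdiff, hbs_bd⟩ :=
          atom_step hQL hpos hadd hsum (hatom_sh T hT) hne hε'pos
        refine ⟨bsT, fun _ => ⟨hbs_sub.trans Set.diff_subset, ?_, ?_⟩⟩
        · intro r hr hrF'
          have hrmem : r ∈ atom T \ B' := hbs_sub (Finset.mem_coe.2 hr)
          by_cases hrT : r ∈ T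
          · have hbatom : b ∈ atom T := hB'sub hbB'
            simp only [hatomdef, QSh, Set.mem_setOf_eq] at hbatom
            have h1 : QLe P r b := hbatom.1 r (Finset.mem_union_right _ hrT)
            have h2 : QLe P b r := hbleast r hrmem.1
            have hrb : r = b := qle_antisymm hQL h1 h2
            exact hrmem.2 (hrb ▸ hbB')
          · have hx := hrmem.1
            simp only [hatomdef, QSh, Set.mem_setOf_eq] at hx
            exact hx.2 r (Finset.mem_union_right _ (Finset.mem_sdiff.2 ⟨hrF', hrT⟩)) (qle_refl r)
        · have e1 : μ (atom T) = μ B' + μ (atom T \ B') := by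
            have h := hadd _ _ (shaped_memBP hB'sh) hmemdiff disjoint_sdiff_self_right
            rwa [Set.union_diff_cancel hB'sub] at h
          have e2 : wt P μ b ≤ wsum P μ B' := wt_le_wsum hpos hsum (shaped_subset_P hB'sh) hbB'
          have e3 : wsum P μ B' ≤ wsum P μ (atom T) :=
            wsum_mono hpos hsum (shaped_subset_P (hatom_sh T hT)) hB'sub
          linarith
    choose bs hbs using hkey
    have hbsd : (↑F'.powerset : Set (Finset G)).PairwiseDisjoint bs := by
      intro T hT T' hT' hne
      rw [Function.onFun, Finset.disjoint_left]
      intro r hr hr'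
      have h1 : r ∈ atom T := (hbs T (Finset.mem_coe.1 hT)).1 (Finset.mem_coe.2 hr)
      have h2 : r ∈ atom T' := (hbs T' (Finset.mem_coe.1 hT')).1 (Finset.mem_coe.2 hr')
      exact Set.disjoint_left.1 (hatom_d hT hT' hne) h1 h2
    have hBSsub : (↑(F'.powerset.biUnion bs) : Set G) ⊆ (P : Set G) := by
      intro r hr
      rw [Finset.mem_coe, Finset.mem_biUnion] at hr
      obtain ⟨T, hT, hrT⟩ := hr
      exact shaped_subset_P (hatom_sh T hT) ((hbs T hT).1 (Finset.mem_coe.2 hrT))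
    have hBSavoid : ∀ r ∈ F'.powerset.biUnion bs, r ∉ F' := by
      intro r hr
      rw [Finset.mem_biUnion] at hr
      obtain ⟨T, hT, hrT⟩ := hr
      exact (hbs T hT).2.1 r hrT
    have hvan := hFvan _ hBSsub hBSavoid
    have hsplit : ∑ T ∈ F'.powerset, (wsum P μ (atom T) + ε' + ∑ r ∈ bs T, μ {x | QLe P r x})
        = (∑ T ∈ F'.powerset, wsum P μ (atom T)) + F'.powerset.card • ε'
          + ∑ r ∈ F'.powerset.biUnion bs, μ {x | QLe P r x} := by
      rw [Finset.sum_add_distrib, Finset.sum_add_distrib, Finset.sum_const,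
        Finset.sum_biUnion hbsd]
    calc μ (QSh P S R) = ∑ T ∈ F'.powerset, μ (atom T) := hmuA
      _ ≤ ∑ T ∈ F'.powerset, (wsum P μ (atom T) + ε' + ∑ r ∈ bs T, μ {x | QLe P r x}) :=
          Finset.sum_le_sum fun T hT => (hbs T hT).2.2
      _ = (∑ T ∈ F'.powerset, wsum P μ (atom T)) + F'.powerset.card • ε'
          + ∑ r ∈ F'.powerset.biUnion bs, μ {x | QLe P r x} := hsplit
      _ ≤ wsum P μ (QSh P S R) + (ε + ε) := by
          rw [← hwA, nsmul_eq_mul]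
          have hce : (F'.powerset.card : ℝ) * ε' = ε := by
            rw [hε'def]
            field_simp
          linarith
  apply le_of_forall_pos_le_add
  intro ε hε
  have hk := key (ε / 2) (by linarith)
  linarith

end QLMeasure


/-- If `μ` is a finitely additive probability measure on `(P, B_P)` with `(μ(pP))_{p ∈ P}`
summable, then for every `Ω ∈ B_P`, `(w_p)_{p ∈ Ω}` is summable with `μ(Ω) = ∑_{p ∈ Ω} w_p`. -/
theorem stmt8 {G : Type*} [Group G] (P : Submonoid G) (hQL : QuasiLatticeOrdered P)
    (μ : Set G → ℝ)
    (hpos : ∀ Ω : Set G, MemBP P Ω → 0 ≤ μ Ω)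
    (hone : μ (P : Set G) = 1)
    (hadd : ∀ Ω₁ Ω₂ : Set G, MemBP P Ω₁ → MemBP P Ω₂ → Disjoint Ω₁ Ω₂ →
      μ (Ω₁ ∪ Ω₂) = μ Ω₁ + μ Ω₂)
    (hsum : Summable fun p : P => μ {x | QLe P (p : G) x}) :
    ∀ Ω : Set G, MemBP P Ω →
      (Summable fun p : Ω => wt P μ (p : G)) ∧ μ Ω = ∑' p : Ω, wt P μ (p : G) := by
  intro Ω hΩ
  have hΩP := memBP_subset_P hΩ
  refine ⟨wsummable hpos hsum hΩP, ?_⟩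
  have hup := qlm_upper hQL hpos hadd hsum hΩ
  have hlow : μ Ω ≤ wsum P μ Ω := by
    obtain ⟨L, hL, rfl⟩ := memBP_goodL hΩ
    rw [mu_unionL' hpos hadd hL, wsum_unionL hpos hsum hL]
    exact List.sum_le_sum fun A hA => qlm_lower hQL hpos hadd hsum (hL.1 A hA)
  exact le_antisymm hlow hup
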